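/- arXiv:2508.12139 — 3 statements merged into one kernel-verified Lean document; each statement's English description precedes it below -/
import Mathlib

section
/- Let α, θ ∈ ℝ, and suppose r, s are coprime integers with |α − r/s| ≤ 1/s². Let P, M, N be positive reals with N ≥ 16sP². Let E be the set of integers m with |m| ≤ M for which there exist coprime integers a, q with 0 < q < P and |θ + mα − a/q| ≤ P/(qN). Then |E| ≤ 16MP²/s + 1. -/
open Classical

/-- Distance from a real number to the nearest integer. -/
noncomputable def distNearestInt (x : ℝ) : ℝ := |x - round x|

private lemma sep_aux (α θ : ℝ) (r s : ℤ) (hrs : IsCoprime r s) (hs : 0 < s)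
    (hα : |α - (r : ℝ) / (s : ℝ)| ≤ 1 / (s : ℝ) ^ 2)
    (P N : ℝ) (hP : 0 < P) (hN : 0 < N) (hNs : 16 * (s : ℝ) * P ^ 2 ≤ N)
    (m m' : ℤ) (hne : m ≠ m')
    (a q : ℤ) (hq : 0 < q) (hqP : (q : ℝ) < P)
    (h1 : |θ + (m : ℝ) * α - (a : ℝ) / (q : ℝ)| ≤ P / ((q : ℝ) * N))
    (a' q' : ℤ) (hq' : 0 < q') (hq'P : (q' : ℝ) < P)
    (h2 : |θ + (m' : ℝ) * α - (a' : ℝ) / (q' : ℝ)| ≤ P / ((q' : ℝ) * N)) :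
    (s : ℝ) / (2 * P ^ 2) < |(m : ℝ) - (m' : ℝ)| := by
  by_contra hcon
  push_neg at hcon
  have hsR : (0 : ℝ) < (s : ℝ) := by exact_mod_cast hs
  have hqR : (0 : ℝ) < (q : ℝ) := by exact_mod_cast hq
  have hq'R : (0 : ℝ) < (q' : ℝ) := by exact_mod_cast hq'
  have hq1 : (1 : ℝ) ≤ (q : ℝ) := by exact_mod_cast hq
  have hq'1 : (1 : ℝ) ≤ (q' : ℝ) := by exact_mod_cast hq'
  set δ : ℤ := m - m' with hδ
  have hδ0 : δ ≠ 0 := sub_ne_zero.mpr hne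
  set B : ℤ := a * q' - a' * q with hB
  -- Step 1: |δ α - B/(q*q')| ≤ P/(qN) + P/(q'N)
  have key : (δ : ℝ) * α - (B : ℝ) / ((q : ℝ) * (q' : ℝ))
      = (θ + (m : ℝ) * α - (a : ℝ) / (q : ℝ)) - (θ + (m' : ℝ) * α - (a' : ℝ) / (q' : ℝ)) := by
    rw [hδ, hB]
    push_cast
    field_simp
    ring
  have h3 : |(δ : ℝ) * α - (B : ℝ) / ((q : ℝ) * (q' : ℝ))|
      ≤ P / ((q : ℝ) * N) + P / ((q' : ℝ) * N) := by
    rw [key]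
    exact (abs_sub _ _).trans (add_le_add h1 h2)
  -- Step 2: replace α by r/s
  have h4 : |(δ : ℝ) * ((r : ℝ) / (s : ℝ)) - (B : ℝ) / ((q : ℝ) * (q' : ℝ))|
      ≤ (P / ((q : ℝ) * N) + P / ((q' : ℝ) * N)) + |(δ : ℝ)| * (1 / (s : ℝ) ^ 2) := by
    have hid : (δ : ℝ) * ((r : ℝ) / (s : ℝ)) - (B : ℝ) / ((q : ℝ) * (q' : ℝ))
        = ((δ : ℝ) * α - (B : ℝ) / ((q : ℝ) * (q' : ℝ))) - (δ : ℝ) * (α - (r : ℝ) / (s : ℝ)) := by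
      ring
    rw [hid]
    refine (abs_sub _ _).trans (add_le_add h3 ?_)
    rw [abs_mul]
    exact mul_le_mul_of_nonneg_left hα (abs_nonneg _)
  -- |δ| ≤ s/(2P²)
  have hδs : |(δ : ℝ)| ≤ (s : ℝ) / (2 * P ^ 2) := by
    have : ((δ : ℤ) : ℝ) = (m : ℝ) - (m' : ℝ) := by rw [hδ]; push_cast; ring
    rw [this]
    exact hcon
  -- Step 3: multiply by s*q*q'
  set K : ℤ := δ * r * (q * q') - B * s with hK
  have habsK : |(K : ℝ)| < 1 := by
    have hc : (0 : ℝ) < (s : ℝ) * (q : ℝ) * (q' : ℝ) := by positivity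
    have hKeq : (K : ℝ) = ((s : ℝ) * (q : ℝ) * (q' : ℝ)) *
        ((δ : ℝ) * ((r : ℝ) / (s : ℝ)) - (B : ℝ) / ((q : ℝ) * (q' : ℝ))) := by
      rw [hK, hδ, hB]
      push_cast
      field_simp
    have h5 : |(K : ℝ)| ≤ ((s : ℝ) * (q : ℝ) * (q' : ℝ)) *
        ((P / ((q : ℝ) * N) + P / ((q' : ℝ) * N)) + |(δ : ℝ)| * (1 / (s : ℝ) ^ 2)) := by
      rw [hKeq, abs_mul, abs_of_pos hc]
      exact mul_le_mul_of_nonneg_left h4 hc.le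
    -- bound the RHS by 1/8 + 1/2
    have e1 : ((s : ℝ) * (q : ℝ) * (q' : ℝ)) * (P / ((q : ℝ) * N) + P / ((q' : ℝ) * N))
        = (s : ℝ) * P * (q' : ℝ) / N + (s : ℝ) * P * (q : ℝ) / N := by
      field_simp
    have e2 : ((s : ℝ) * (q : ℝ) * (q' : ℝ)) * (|(δ : ℝ)| * (1 / (s : ℝ) ^ 2))
        = (q : ℝ) * (q' : ℝ) * |(δ : ℝ)| / (s : ℝ) := by
      field_simp
    have hb1 : (s : ℝ) * P * (q' : ℝ) / N ≤ 1 / 16 := by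
      rw [div_le_iff₀ hN]
      have ha1 : (s : ℝ) * P * (q' : ℝ) ≤ (s : ℝ) * P * P :=
        mul_le_mul_of_nonneg_left hq'P.le (by positivity)
      have ha2 : (s : ℝ) * P * P = (s : ℝ) * P ^ 2 := by ring
      linarith
    have hb2 : (s : ℝ) * P * (q : ℝ) / N ≤ 1 / 16 := by
      rw [div_le_iff₀ hN]
      have ha1 : (s : ℝ) * P * (q : ℝ) ≤ (s : ℝ) * P * P :=
        mul_le_mul_of_nonneg_left hqP.le (by positivity)
      have ha2 : (s : ℝ) * P * P = (s : ℝ) * P ^ 2 := by ring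
      linarith
    have hb3 : (q : ℝ) * (q' : ℝ) * |(δ : ℝ)| / (s : ℝ) ≤ 1 / 2 := by
      rw [div_le_iff₀ hsR]
      have hqq' : (q : ℝ) * (q' : ℝ) ≤ P ^ 2 := by nlinarith
      have habs : (0 : ℝ) ≤ |(δ : ℝ)| := abs_nonneg _
      have h2P : (0 : ℝ) < 2 * P ^ 2 := by positivity
      have := mul_le_mul hqq' hδs habs (by positivity : (0:ℝ) ≤ P ^ 2)
      calc (q : ℝ) * (q' : ℝ) * |(δ : ℝ)| ≤ P ^ 2 * ((s : ℝ) / (2 * P ^ 2)) := this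
        _ = 1 / 2 * (s : ℝ) := by field_simp
    calc |(K : ℝ)| ≤ _ := h5
      _ = ((s : ℝ) * P * (q' : ℝ) / N + (s : ℝ) * P * (q : ℝ) / N)
          + (q : ℝ) * (q' : ℝ) * |(δ : ℝ)| / (s : ℝ) := by rw [mul_add, e1, e2]
      _ ≤ (1 / 16 + 1 / 16) + 1 / 2 := by gcongr
      _ < 1 := by norm_num
  have hK0 : K = 0 := by
    have h1 : |K| < 1 := by exact_mod_cast habsK
    have h2 := abs_lt.mp h1
    omega
  -- Step 4: divisibility contradiction
  have hdvd : s ∣ δ * (q * q') := by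
    have h1 : s ∣ (δ * (q * q')) * r := ⟨B, by linarith [hK0, hK]⟩
    exact (hrs.symm).dvd_of_dvd_mul_right h1
  set d : ℕ := Int.gcd δ s with hd
  have hdpos : 0 < d := Int.gcd_pos_of_ne_zero_left s hδ0
  have hdδ : (d : ℤ) ∣ δ := Int.gcd_dvd_left δ s
  have hds : (d : ℤ) ∣ s := Int.gcd_dvd_right δ s
  have hcop : IsCoprime (δ / d) (s / d) := by
    rw [Int.isCoprime_iff_gcd_eq_one]
    exact Int.gcd_div_gcd_div_gcd hdpos
  have hs' : s = d * (s / d) := by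
    rw [mul_comm]; exact (Int.ediv_mul_cancel hds).symm
  have hδ' : δ = d * (δ / d) := by rw [mul_comm]; exact (Int.ediv_mul_cancel hdδ).symm
  have hs'pos : 0 < s / d := by
    by_contra h
    push_neg at h
    have hd0 : (0 : ℤ) < (d : ℤ) := by exact_mod_cast hdpos
    have : (d : ℤ) * (s / d) ≤ 0 := mul_nonpos_of_nonneg_of_nonpos hd0.le h
    rw [← hs'] at this
    exact absurd hs (not_lt.mpr this)
  have hdvd2 : (s / d) ∣ (δ / d) * (q * q') := by
    have hdne : (d : ℤ) ≠ 0 := by exact_mod_cast hdpos.ne'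
    have : (d : ℤ) * (s / d) ∣ (d : ℤ) * ((δ / d) * (q * q')) := by
      rw [← hs', ← mul_assoc, ← hδ']
      exact hdvd
    exact (mul_dvd_mul_iff_left hdne).mp this
  have hdvd3 : (s / d) ∣ q * q' := (hcop.symm).dvd_of_dvd_mul_left hdvd2
  have hle : s / d ≤ q * q' := Int.le_of_dvd (mul_pos hq hq') hdvd3
  -- real contradiction
  have hdle : (d : ℝ) ≤ (s : ℝ) / (2 * P ^ 2) := by
    have h1 : (d : ℤ) ≤ |δ| := Int.le_of_dvd (abs_pos.mpr hδ0) (hdδ.trans (self_dvd_abs δ))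
    calc (d : ℝ) ≤ |(δ : ℝ)| := by rw [← Int.cast_abs]; exact_mod_cast h1
      _ ≤ _ := hδs
  have hQP : ((q * q' : ℤ) : ℝ) < P ^ 2 := by
    push_cast
    calc (q : ℝ) * (q' : ℝ) < P * P := mul_lt_mul'' hqP hq'P hqR.le hq'R.le
      _ = P ^ 2 := (pow_two P).symm
  have hsdR : ((s / d : ℤ) : ℝ) ≤ ((q * q' : ℤ) : ℝ) := by exact_mod_cast hle
  have hseq : (s : ℝ) = (d : ℝ) * ((s / d : ℤ) : ℝ) := by exact_mod_cast hs'
  have hsd'pos : (0 : ℝ) < ((s / d : ℤ) : ℝ) := by exact_mod_cast hs'pos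
  have hdpos' : (0 : ℝ) < (d : ℝ) := by exact_mod_cast hdpos
  have hstep : (s : ℝ) ≤ ((s : ℝ) / (2 * P ^ 2)) * ((s / d : ℤ) : ℝ) :=
    calc (s : ℝ) = (d : ℝ) * ((s / d : ℤ) : ℝ) := hseq
      _ ≤ ((s : ℝ) / (2 * P ^ 2)) * ((s / d : ℤ) : ℝ) :=
          mul_le_mul_of_nonneg_right hdle hsd'pos.le
  have hstep2 : ((s : ℝ) / (2 * P ^ 2)) * ((s / d : ℤ) : ℝ)
      < ((s : ℝ) / (2 * P ^ 2)) * P ^ 2 :=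
    mul_lt_mul_of_pos_left (lt_of_le_of_lt hsdR hQP) (by positivity)
  have hstep3 : ((s : ℝ) / (2 * P ^ 2)) * P ^ 2 = (s : ℝ) / 2 := by
    field_simp
  linarith

theorem stmt0 (α θ : ℝ) (r s : ℤ) (hrs : IsCoprime r s) (hs : 0 < s)
    (hα : |α - (r : ℝ) / (s : ℝ)| ≤ 1 / (s : ℝ) ^ 2)
    (P M N : ℝ) (hP : 0 < P) (hM : 0 < M) (hN : 0 < N)
    (hNs : 16 * (s : ℝ) * P ^ 2 ≤ N) :
    (((Finset.Icc ⌈-M⌉ ⌊M⌋).filter (fun m : ℤ =>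
      ∃ a q : ℤ, IsCoprime a q ∧ 0 < q ∧ (q : ℝ) < P ∧
        |θ + (m : ℝ) * α - (a : ℝ) / (q : ℝ)| ≤ P / ((q : ℝ) * N))).card : ℝ) ≤
      16 * M * P ^ 2 / (s : ℝ) + 1 := by
  set E := (Finset.Icc ⌈-M⌉ ⌊M⌋).filter (fun m : ℤ =>
      ∃ a q : ℤ, IsCoprime a q ∧ 0 < q ∧ (q : ℝ) < P ∧
        |θ + (m : ℝ) * α - (a : ℝ) / (q : ℝ)| ≤ P / ((q : ℝ) * N)) with hE
  have hsR : (0 : ℝ) < (s : ℝ) := by exact_mod_cast hs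
  set g : ℝ := (s : ℝ) / (2 * P ^ 2) with hg
  have hgpos : 0 < g := by positivity
  -- separation
  have hsep : ∀ m ∈ E, ∀ m' ∈ E, m ≠ m' → g < |(m : ℝ) - (m' : ℝ)| := by
    intro m hm m' hm' hne
    rw [hE, Finset.mem_filter] at hm hm'
    obtain ⟨-, a, q, -, hq, hqP, h1⟩ := hm
    obtain ⟨-, a', q', -, hq', hq'P, h2⟩ := hm'
    exact sep_aux α θ r s hrs hs hα P N hP hN hNs m m' hne a q hq hqP h1 a' q' hq' hq'P h2
  rcases E.eq_empty_or_nonempty with hEe | hEne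
  · rw [hEe]
    simp only [Finset.card_empty, Nat.cast_zero]
    positivity
  -- bounds on members
  have hmem : ∀ m ∈ E, -M ≤ (m : ℝ) ∧ (m : ℝ) ≤ M := by
    intro m hm
    rw [hE, Finset.mem_filter, Finset.mem_Icc] at hm
    obtain ⟨⟨h1, h2⟩, -⟩ := hm
    constructor
    · have h3 : (-M : ℝ) ≤ (⌈-M⌉ : ℤ) := Int.le_ceil _
      have h4 : ((⌈-M⌉ : ℤ) : ℝ) ≤ (m : ℝ) := by exact_mod_cast h1
      linarith
    · have h3 : ((⌊M⌋ : ℤ) : ℝ) ≤ M := Int.floor_le _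
      have h4 : (m : ℝ) ≤ ((⌊M⌋ : ℤ) : ℝ) := by exact_mod_cast h2
      linarith
  set A : ℤ := E.min' hEne with hA
  have hAE : A ∈ E := E.min'_mem hEne
  set f : ℤ → ℤ := fun m => ⌊((m : ℝ) - (A : ℝ)) / g⌋ with hf
  set L : ℤ := ⌊2 * M / g⌋ with hL
  have hfmono : ∀ m ∈ E, ∀ m' ∈ E, m < m' → f m < f m' := by
    intro m hm m' hm' hlt
    have hsepmm := hsep m hm m' hm' hlt.ne
    have hltR : (m : ℝ) < (m' : ℝ) := by exact_mod_cast hlt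
    rw [abs_sub_comm, abs_of_pos (by linarith)] at hsepmm
    have key : ((m : ℝ) - (A : ℝ)) / g + 1 ≤ ((m' : ℝ) - (A : ℝ)) / g := by
      have hid : ((m' : ℝ) - (A : ℝ)) / g - (((m : ℝ) - (A : ℝ)) / g + 1)
          = (((m' : ℝ) - (m : ℝ)) - g) / g := by field_simp; ring
      have hnn : (0 : ℝ) ≤ (((m' : ℝ) - (m : ℝ)) - g) / g :=
        div_nonneg (by linarith) hgpos.le
      linarith
    calc f m = ⌊((m : ℝ) - (A : ℝ)) / g⌋ := rfl
      _ < ⌊((m : ℝ) - (A : ℝ)) / g⌋ + 1 := lt_add_one _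
      _ = ⌊((m : ℝ) - (A : ℝ)) / g + 1⌋ := (Int.floor_add_one _).symm
      _ ≤ ⌊((m' : ℝ) - (A : ℝ)) / g⌋ := Int.floor_le_floor key
      _ = f m' := rfl
  have hcard : E.card ≤ (Finset.Icc (0 : ℤ) L).card := by
    apply Finset.card_le_card_of_injOn f
    · intro m hm
      rw [Finset.mem_coe, Finset.mem_Icc]
      have hAm : (A : ℝ) ≤ (m : ℝ) := by exact_mod_cast E.min'_le m hm
      constructor
      · exact Int.floor_nonneg.mpr (div_nonneg (by linarith) hgpos.le)
      · apply Int.floor_le_floor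
        have h1 := (hmem m hm).2
        have h2 := (hmem A hAE).1
        exact (div_le_div_iff_of_pos_right hgpos).mpr (by linarith)
    · intro m hm m' hm' hfe
      by_contra hne
      rcases lt_or_gt_of_ne hne with h | h
      · exact absurd hfe (hfmono m hm m' hm' h).ne
      · exact absurd hfe.symm (hfmono m' hm' m hm h).ne
  have hL0 : 0 ≤ L := Int.floor_nonneg.mpr (by positivity)
  have hcardIcc : ((Finset.Icc (0 : ℤ) L).card : ℝ) = (L : ℝ) + 1 := by
    rw [Int.card_Icc, show L + 1 - 0 = L + 1 from by ring]
    have h1 : (((L + 1).toNat : ℤ) : ℝ) = ((L : ℝ) + 1) := by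
      rw [Int.toNat_of_nonneg (by omega)]; push_cast; ring
    exact_mod_cast h1
  have hLle : (L : ℝ) ≤ 2 * M / g := Int.floor_le _
  have h2Mg : 2 * M / g = 4 * M * P ^ 2 / (s : ℝ) := by
    rw [hg]
    field_simp
    ring
  calc (E.card : ℝ) ≤ ((Finset.Icc (0 : ℤ) L).card : ℝ) := by exact_mod_cast hcard
    _ = (L : ℝ) + 1 := hcardIcc
    _ ≤ 2 * M / g + 1 := by linarith
    _ = 4 * M * P ^ 2 / (s : ℝ) + 1 := by rw [h2Mg]
    _ ≤ 16 * M * P ^ 2 / (s : ℝ) + 1 := by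
        have : (0 : ℝ) ≤ M * P ^ 2 / (s : ℝ) := by positivity
        have h4 : 4 * M * P ^ 2 / (s : ℝ) = 4 * (M * P ^ 2 / (s : ℝ)) := by ring
        have h16 : 16 * M * P ^ 2 / (s : ℝ) = 16 * (M * P ^ 2 / (s : ℝ)) := by ring
        rw [h4, h16]
        linarith
end

section
/- Let α, θ ∈ ℝ, r, s coprime integers with |α − r/s| ≤ 1/s², and P, M, N positive reals with N ≥ 16sP². Suppose m₁ ≠ m₂ are integers in [−M, M] with |m₁ − m₂| ≤ s/(8P²), and for j = 1, 2 there exist coprime integers a_j, q_j with 0 < q_j < P and |θ + m_jα − a_j/q_j| ≤ P/(q_jN). Then a contradiction follows; i.e., no two such distinct m₁, m₂ can be that close. -/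
set_option maxHeartbeats 1000000 in
theorem stmt1 (α θ : ℝ) (r s : ℤ) (hrs : IsCoprime r s) (hs : 0 < s)
    (hα : |α - (r : ℝ) / (s : ℝ)| ≤ 1 / (s : ℝ) ^ 2)
    (P M N : ℝ) (hP : 0 < P) (hM : 0 < M) (hN : 0 < N)
    (hNs : 16 * (s : ℝ) * P ^ 2 ≤ N)
    (m₁ m₂ : ℤ) (hne : m₁ ≠ m₂)
    (hm₁ : |(m₁ : ℝ)| ≤ M) (hm₂ : |(m₂ : ℝ)| ≤ M)
    (hclose : |(m₁ : ℝ) - (m₂ : ℝ)| ≤ (s : ℝ) / (8 * P ^ 2))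
    (a₁ q₁ a₂ q₂ : ℤ)
    (hc₁ : IsCoprime a₁ q₁) (hq₁ : 0 < q₁) (hq₁P : (q₁ : ℝ) < P)
    (hc₂ : IsCoprime a₂ q₂) (hq₂ : 0 < q₂) (hq₂P : (q₂ : ℝ) < P)
    (happrox₁ : |θ + (m₁ : ℝ) * α - (a₁ : ℝ) / (q₁ : ℝ)| ≤ P / ((q₁ : ℝ) * N))
    (happrox₂ : |θ + (m₂ : ℝ) * α - (a₂ : ℝ) / (q₂ : ℝ)| ≤ P / ((q₂ : ℝ) * N)) :
    False := by
  set d : ℤ := m₁ - m₂ with hdd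
  have hd0 : d ≠ 0 := sub_ne_zero.mpr hne
  have hq1R : (0:ℝ) < (q₁:ℝ) := by exact_mod_cast hq₁
  have hq2R : (0:ℝ) < (q₂:ℝ) := by exact_mod_cast hq₂
  have hsR : (0:ℝ) < (s:ℝ) := by exact_mod_cast hs
  have hdR : |((d:ℝ))| ≤ (s:ℝ) / (8 * P ^ 2) := by
    have : ((d:ℝ)) = (m₁:ℝ) - (m₂:ℝ) := by push_cast [hdd]; ring
    rw [this]; exact hclose
  set k : ℤ := d * r * q₁ * q₂ - (a₁ * q₂ - a₂ * q₁) * s with hk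
  rcases eq_or_ne k 0 with h0 | h0
  · -- k = 0 case: s ∣ d * q₁ * q₂, so s ≤ |d| q₁ q₂ ≤ s/8 < s.
    have hdvd : s ∣ r * (d * q₁ * q₂) := ⟨a₁ * q₂ - a₂ * q₁, by linear_combination h0⟩
    have hdvd2 : s ∣ d * q₁ * q₂ := (hrs.symm).dvd_of_dvd_mul_left hdvd
    have hpos : 0 < |d * q₁ * q₂| :=
      abs_pos.mpr (mul_ne_zero (mul_ne_zero hd0 (Int.ne_of_gt hq₁)) (Int.ne_of_gt hq₂))
    have hle : s ≤ |d * q₁ * q₂| := Int.le_of_dvd hpos ((dvd_abs _ _).mpr hdvd2)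
    have hleR : (s:ℝ) ≤ |(d:ℝ)| * (q₁:ℝ) * (q₂:ℝ) := by
      have h2 : ((s:ℤ):ℝ) ≤ ((|d * q₁ * q₂| : ℤ) : ℝ) := by exact_mod_cast hle
      push_cast at h2
      rw [abs_mul, abs_mul, abs_of_pos hq1R, abs_of_pos hq2R] at h2
      linarith
    have hdpos : (0:ℝ) < |(d:ℝ)| := by
      rw [abs_pos]; exact_mod_cast hd0
    have hdle : |(d:ℝ)| * (8 * P ^ 2) ≤ (s:ℝ) := by
      have := (le_div_iff₀ (by positivity : (0:ℝ) < 8 * P ^ 2)).mp hdR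
      linarith
    nlinarith [mul_lt_mul_of_pos_left hq₂P (mul_pos hdpos hq1R),
      mul_lt_mul_of_pos_left hq₁P hdpos, hdle, hP, hsR]
  · have h1 : (1:ℝ) ≤ |(k:ℝ)| := by
      have : (1:ℤ) ≤ |k| := Int.one_le_abs h0
      exact_mod_cast (by exact_mod_cast this : (1:ℝ) ≤ |(k:ℝ)|)
    have hkeq : (k:ℝ) = (s:ℝ) * q₁ * q₂ * (((d:ℝ)) * α - ((a₁:ℝ)/(q₁:ℝ) - (a₂:ℝ)/(q₂:ℝ)))
        - (s:ℝ) * q₁ * q₂ * (d:ℝ) * (α - (r:ℝ)/(s:ℝ)) := by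
      field_simp [hk, hdd]
      rw [hk]; push_cast
      ring
    have hdiff : |((d:ℝ)) * α - ((a₁:ℝ)/(q₁:ℝ) - (a₂:ℝ)/(q₂:ℝ))| ≤ P/((q₁:ℝ)*N) + P/((q₂:ℝ)*N) := by
      have heq : ((d:ℝ)) * α - ((a₁:ℝ)/(q₁:ℝ) - (a₂:ℝ)/(q₂:ℝ))
          = (θ + (m₁:ℝ) * α - (a₁:ℝ)/(q₁:ℝ)) - (θ + (m₂:ℝ) * α - (a₂:ℝ)/(q₂:ℝ)) := by
        push_cast [hdd]; ring
      rw [heq]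
      exact (abs_sub _ _).trans (add_le_add happrox₁ happrox₂)
    have hbound : |(k:ℝ)| ≤ (s:ℝ) * q₁ * q₂ * (P/((q₁:ℝ)*N) + P/((q₂:ℝ)*N))
        + (s:ℝ) * q₁ * q₂ * |(d:ℝ)| * (1 / (s:ℝ)^2) := by
      rw [hkeq]
      refine (abs_sub _ _).trans (add_le_add ?_ ?_)
      · rw [abs_mul, abs_of_pos (by positivity : (0:ℝ) < (s:ℝ)*q₁*q₂)]
        exact mul_le_mul_of_nonneg_left hdiff (by positivity)
      · rw [abs_mul, abs_mul, abs_of_pos (by positivity : (0:ℝ) < (s:ℝ)*q₁*q₂)]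
        exact mul_le_mul (le_refl _) hα (abs_nonneg _) (by positivity) |>.trans_eq (by ring) |>.trans (le_refl _)
    -- now numeric contradiction
    have e1 : (s:ℝ) * q₁ * q₂ * (P/((q₁:ℝ)*N) + P/((q₂:ℝ)*N)) = (s:ℝ) * P * (q₂ + q₁) / N := by
      field_simp
    have e2 : (s:ℝ) * q₁ * q₂ * |(d:ℝ)| * (1 / (s:ℝ)^2) = (q₁:ℝ) * q₂ * |(d:ℝ)| / s := by
      field_simp
    have hb1 : (s:ℝ) * P * ((q₂:ℝ) + q₁) / N ≤ 1/8 := by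
      rw [div_le_iff₀ hN]
      nlinarith [mul_pos hsR hP, hq1R, hq2R]
    have hb2 : (q₁:ℝ) * q₂ * |(d:ℝ)| / s ≤ 1/8 := by
      rw [div_le_iff₀ hsR]
      have hdle : |(d:ℝ)| * (8 * P^2) ≤ s := by
        have := (le_div_iff₀ (by positivity : (0:ℝ) < 8 * P^2)).mp hdR
        linarith
      have h3 : (q₁:ℝ) * q₂ ≤ P * P := by nlinarith
      nlinarith [mul_le_mul_of_nonneg_right h3 (abs_nonneg ((d:ℝ)))]
    rw [e1, e2] at hbound
    linarith [hb1, hb2, h1, hbound]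
end

section
/- Let α, θ ∈ ℝ, and let r, s be coprime integers with |α − r/s| ≤ 1/s². Let P, M, N be positive reals with N ≥ 16sP². Let a, q be coprime integers with 0 < 2q < P. Suppose m is an integer with |m| ≤ M, and suppose there exist coprime integers a_m, q_m with P ≤ q_m ≤ N/P and |θ + mα − a_m/q_m| ≤ P/(q_mN). Then ‖θ + mα − a/q‖ ≥ 1/(q·q_m) − 1/q_m², and consequently |∑_{n=1}^{⌊N⌋} e(n(θ + mα − a/q))| ≪ Nq/P. -/
/-- The additive character `e(x) = exp(2πix)`. -/
noncomputable def eChar (x : ℝ) : ℂ := Complex.exp (2 * Real.pi * Complex.I * x)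

lemma eChar_eq (x : ℝ) :
    eChar x = Complex.exp (((2 * Real.pi * x : ℝ) : ℂ) * Complex.I) := by
  unfold eChar; push_cast; ring_nf

lemma eChar_norm (x : ℝ) : ‖eChar x‖ = 1 := by
  rw [eChar_eq, Complex.norm_exp_ofReal_mul_I]

lemma eChar_int_add (k : ℤ) (x : ℝ) : eChar ((k : ℝ) + x) = eChar x := by
  unfold eChar
  rw [show (2 * (Real.pi:ℂ) * Complex.I * (((k:ℝ) + x : ℝ) : ℂ))
      = (k : ℂ) * (2 * Real.pi * Complex.I) + 2 * Real.pi * Complex.I * (x:ℝ) by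
    push_cast; ring]
  rw [Complex.exp_add, Complex.exp_int_mul_two_pi_mul_I, one_mul]

lemma eChar_nat_mul (n : ℕ) (x : ℝ) : eChar ((n : ℝ) * x) = (eChar x) ^ n := by
  unfold eChar
  rw [show (2 * (Real.pi:ℂ) * Complex.I * (((n:ℝ) * x : ℝ) : ℂ))
      = (n : ℂ) * (2 * Real.pi * Complex.I * (x:ℝ)) by push_cast; ring]
  exact Complex.exp_nat_mul _ n

lemma eChar_sub_one_norm_sq (x : ℝ) :
    ‖eChar x - 1‖ ^ 2 = 2 - 2 * Real.cos (2 * Real.pi * x) := by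
  rw [eChar_eq, Complex.exp_mul_I]
  have h1 : Complex.cos ((2 * Real.pi * x : ℝ) : ℂ) = ((Real.cos (2 * Real.pi * x) : ℝ) : ℂ) :=
    (Complex.ofReal_cos _).symm
  have h2 : Complex.sin ((2 * Real.pi * x : ℝ) : ℂ) = ((Real.sin (2 * Real.pi * x) : ℝ) : ℂ) :=
    (Complex.ofReal_sin _).symm
  rw [h1, h2]
  have : ((Real.cos (2 * Real.pi * x) : ℝ) : ℂ) + (Real.sin (2 * Real.pi * x) : ℂ) * Complex.I - 1
      = ((Real.cos (2 * Real.pi * x) - 1 : ℝ) : ℂ) + ((Real.sin (2 * Real.pi * x) : ℝ) : ℂ) * Complex.I := by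
    push_cast; ring
  rw [this, Complex.sq_norm, Complex.normSq_add_mul_I]
  have hsc := Real.sin_sq_add_cos_sq (2 * Real.pi * x)
  nlinarith [hsc]

lemma four_mul_le_norm_eChar_sub_one (x : ℝ) (hx : |x| ≤ 1 / 2) :
    4 * |x| ≤ ‖eChar x - 1‖ := by
  have hπ := Real.pi_pos
  have hsin : 2 * |x| ≤ Real.sin (Real.pi * |x|) := by
    have h1 : (0:ℝ) ≤ Real.pi * |x| := by positivity
    have h2 : Real.pi * |x| ≤ Real.pi / 2 := by nlinarith [abs_nonneg x]
    have := Real.mul_le_sin h1 h2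
    calc 2 * |x| = 2 / Real.pi * (Real.pi * |x|) := by field_simp
    _ ≤ Real.sin (Real.pi * |x|) := this
  have hsq : Real.sin (Real.pi * x) ^ 2 = Real.sin (Real.pi * |x|) ^ 2 := by
    rcases abs_cases x with ⟨h, _⟩ | ⟨h, _⟩
    · rw [h]
    · rw [h, mul_neg, Real.sin_neg]; ring
  have hcos : 2 - 2 * Real.cos (2 * Real.pi * x) = 4 * Real.sin (Real.pi * x) ^ 2 := by
    have h := Real.cos_two_mul (Real.pi * x)
    have h2 := Real.sin_sq_add_cos_sq (Real.pi * x)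
    have : 2 * Real.pi * x = 2 * (Real.pi * x) := by ring
    rw [this, h]; nlinarith
  have hnorm := eChar_sub_one_norm_sq x
  have hn : ‖eChar x - 1‖ ^ 2 = 4 * Real.sin (Real.pi * |x|) ^ 2 := by
    rw [hnorm, hcos, hsq]
  have h0 : (0:ℝ) ≤ ‖eChar x - 1‖ := norm_nonneg _
  nlinarith [abs_nonneg x]

theorem stmt13 :
    ∃ C : ℝ, 0 < C ∧
      ∀ (α θ : ℝ) (r s : ℤ), IsCoprime r s → 0 < s →
        |α - (r : ℝ) / (s : ℝ)| ≤ 1 / (s : ℝ) ^ 2 →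
      ∀ (P M N : ℝ), 0 < P → 0 < M → 0 < N → 16 * (s : ℝ) * P ^ 2 ≤ N →
      ∀ (a q : ℤ), IsCoprime a q → 0 < q → 2 * (q : ℝ) < P →
      ∀ m : ℤ, |(m : ℝ)| ≤ M →
      ∀ (am qm : ℤ), IsCoprime am qm → P ≤ (qm : ℝ) → (qm : ℝ) ≤ N / P →
        |θ + (m : ℝ) * α - (am : ℝ) / (qm : ℝ)| ≤ P / ((qm : ℝ) * N) →
      1 / ((q : ℝ) * (qm : ℝ)) - 1 / (qm : ℝ) ^ 2 ≤
          distNearestInt (θ + (m : ℝ) * α - (a : ℝ) / (q : ℝ)) ∧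
        ‖∑ n ∈ Finset.Icc 1 ⌊N⌋₊,
            eChar ((n : ℝ) * (θ + (m : ℝ) * α - (a : ℝ) / (q : ℝ)))‖ ≤
          C * N * (q : ℝ) / P := by
  refine ⟨1, one_pos, ?_⟩
  intro α θ r s hrs hs hα P M N hP hM hN hNP a q haq hq hqP m hm am qm hamqm hPqm hqmNP hθ
  have hq0 : (0:ℝ) < q := by exact_mod_cast hq
  have hqm0 : (0:ℝ) < qm := lt_of_lt_of_le hP hPqm
  have hqmz : (0:ℤ) < qm := by exact_mod_cast hqm0
  have hqlt : (q:ℝ) < qm := by nlinarith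
  set β : ℝ := θ + (m : ℝ) * α - (a : ℝ) / (q : ℝ) with hβ
  -- Step 1: for every integer k, the rational am/qm - a/q - k is at least 1/(q qm) in abs value
  have hk : ∀ k : ℤ, 1 / ((q:ℝ) * qm) ≤ |(am:ℝ)/qm - (a:ℝ)/q - k| := by
    intro k
    have hne : (am * q - a * qm - k * q * qm : ℤ) ≠ 0 := by
      intro h
      have hdvd : (qm:ℤ) ∣ am * q := ⟨a + k * q, by linarith⟩
      have hdq : (qm:ℤ) ∣ q := (hamqm.symm).dvd_of_dvd_mul_left hdvd
      have := Int.le_of_dvd hq hdq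
      have : (qm:ℝ) ≤ q := by exact_mod_cast this
      linarith
    have h1 : (1:ℝ) ≤ |((am * q - a * qm - k * q * qm : ℤ) : ℝ)| := by
      rw [← Int.cast_abs]
      exact_mod_cast Int.one_le_abs (by omega)
    have heq : (am:ℝ)/qm - (a:ℝ)/q - k
        = ((am * q - a * qm - k * q * qm : ℤ) : ℝ) / ((q:ℝ) * qm) := by
      push_cast
      field_simp
    rw [heq, abs_div, abs_of_pos (by positivity : (0:ℝ) < (q:ℝ) * qm)]
    apply div_le_div_of_nonneg_right h1 (by positivity) |>.trans_eq rfl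
  -- Step 2: the lower bound on distNearestInt
  have hPq : P / ((qm:ℝ) * N) ≤ 1 / (qm:ℝ)^2 := by
    rw [div_le_div_iff₀ (by positivity) (by positivity)]
    have : P * (qm:ℝ) ≤ N := by
      have := (le_div_iff₀ hP).mp hqmNP
      nlinarith
    nlinarith
  have hdist : 1 / ((q:ℝ) * qm) - 1 / (qm:ℝ)^2 ≤ distNearestInt β := by
    unfold distNearestInt
    set k : ℤ := round β
    have h2 := hk k
    have h3 : |θ + (m:ℝ) * α - (am:ℝ)/qm| ≤ 1 / (qm:ℝ)^2 := hθ.trans hPq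
    have h4 : |(am:ℝ)/qm - (a:ℝ)/q - k| ≤ |β - k| + |θ + (m:ℝ) * α - (am:ℝ)/qm| := by
      have heq : (am:ℝ)/qm - (a:ℝ)/q - k = (β - k) - (θ + (m:ℝ) * α - (am:ℝ)/qm) := by
        rw [hβ]; ring
      rw [heq]
      exact abs_sub _ _
    linarith
  refine ⟨hdist, ?_⟩
  -- Step 3: lower bound distNearestInt β ≥ 1/(2 q qm)
  have h2q : 2 * (q:ℝ) ≤ qm := le_of_lt (lt_of_lt_of_le hqP hPqm)
  have hD2 : 1 / (2 * (q:ℝ) * qm) ≤ 1 / ((q:ℝ) * qm) - 1 / (qm:ℝ)^2 := by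
    have e1 : 1 / ((q:ℝ) * qm) - 1 / (qm:ℝ)^2 = ((qm:ℝ) - q) / ((q:ℝ) * qm^2) := by
      field_simp
    rw [e1, div_le_div_iff₀ (by positivity) (by positivity)]
    nlinarith [mul_le_mul_of_nonneg_right h2q (le_of_lt (mul_pos hq0 hqm0))]
  set D : ℝ := distNearestInt β with hD
  have hDpos : 0 < D := lt_of_lt_of_le (by positivity) (hD2.trans hdist)
  have hDlow : 1 / (2 * (q:ℝ) * qm) ≤ D := hD2.trans hdist
  -- Step 4: z := eChar β, ‖z - 1‖ ≥ 4 D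
  set z : ℂ := eChar β with hz
  have hzβ : z = eChar (β - round β) := by
    rw [hz, ← eChar_int_add (round β) (β - round β)]
    congr 1
    ring
  have hz1 : 4 * D ≤ ‖z - 1‖ := by
    rw [hzβ]
    have : D = |β - round β| := rfl
    rw [this]
    exact four_mul_le_norm_eChar_sub_one _ (abs_sub_round β)
  have hzne : z ≠ 1 := by
    intro h
    rw [h] at hz1
    simp only [sub_self, norm_zero] at hz1
    linarith
  -- Step 5: the sum equals z * geometric sum
  set K := ⌊N⌋₊ with hK
  have hsum : ∑ n ∈ Finset.Icc 1 K, eChar ((n : ℝ) * β)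
      = z * ((z ^ K - 1) / (z - 1)) := by
    have h1 : ∀ n ∈ Finset.Icc 1 K, eChar ((n : ℝ) * β) = z ^ n := by
      intro n _
      rw [hz, eChar_nat_mul]
    rw [Finset.sum_congr rfl h1]
    rw [← Finset.Ico_add_one_right_eq_Icc, Finset.sum_Ico_eq_sum_range]
    simp only [Nat.succ_sub_one, Nat.add_sub_cancel]
    rw [← geom_sum_eq hzne K, Finset.mul_sum]
    apply Finset.sum_congr rfl
    intro i _
    rw [pow_add, pow_one]
  rw [hsum]
  -- Step 6: final estimate
  have hzK : ‖z ^ K - 1‖ ≤ 2 := by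
    calc ‖z ^ K - 1‖ ≤ ‖z ^ K‖ + ‖(1:ℂ)‖ := norm_sub_le _ _
    _ = 2 := by rw [norm_pow, hz, eChar_norm]; norm_num
  have hzsub : (0:ℝ) < ‖z - 1‖ := by
    have := norm_nonneg (z - 1); nlinarith
  have hznorm : ‖z‖ = 1 := by rw [hz]; exact eChar_norm β
  have hmain : ‖z * ((z ^ K - 1) / (z - 1))‖ ≤ 2 / (4 * D) := by
    rw [norm_mul, norm_div, hznorm, one_mul]
    exact div_le_div₀ (by norm_num) hzK (by positivity) hz1
  have h6 : 2 / (4 * D) ≤ (q:ℝ) * qm := by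
    have h7 : 2 / (4 * D) ≤ 2 / (4 * (1 / (2 * (q:ℝ) * qm))) := by
      apply div_le_div_of_nonneg_left (by norm_num) (by positivity)
      linarith [hDlow]
    calc 2 / (4 * D) ≤ 2 / (4 * (1 / (2 * (q:ℝ) * qm))) := h7
    _ = (q:ℝ) * qm := by field_simp; ring
  have h8 : (q:ℝ) * qm ≤ N * q / P := by
    rw [le_div_iff₀ hP]
    have h9 : (qm:ℝ) * P ≤ N := (le_div_iff₀ hP).mp hqmNP
    calc (q:ℝ) * qm * P = (q:ℝ) * (qm * P) := by ring
    _ ≤ (q:ℝ) * N := mul_le_mul_of_nonneg_left h9 (le_of_lt hq0)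
    _ = N * q := by ring
  calc ‖z * ((z ^ K - 1) / (z - 1))‖ ≤ 2 / (4 * D) := hmain
  _ ≤ (q:ℝ) * qm := h6
  _ ≤ N * q / P := h8
  _ = 1 * N * (q:ℝ) / P := by ring
end
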